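/- Fix α ≥ 2 and let π(x) = x^{−(2α+1)} e^{−1/x} / Γ(2α) for x ∈ (0, ∞) (the Inverse-Gamma density with shape 2α). Then its first moment is m₁ = 1/(2α − 1), its second moment is m₂ = 1/((2α − 1)(2α − 2)); for the variance function σ²(x)/2 = x² the average variance is σ̂²/2 = m₂ = 1/((2α − 1)(2α − 2)), the variance of π is m₂ − m₁² = 1/((2α − 1)²(2α − 2)), and hence the ratio σ̂²/(2(m₂ − m₁²)) = 2α − 1, which equals the smallest nonzero discrete eigenvalue λ₁ = 1·(2α − 1) of the Reciprocal Gamma diffusion; thus the Reciprocal Gamma process attains the optimal convergence rate. -/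

import Mathlib

open MeasureTheory Set

lemma aux_gamma (s : ℝ) (hs : 0 < s) :
    (∫ x in Set.Ioi (0 : ℝ), x ^ (-(s+1)) * Real.exp (-1/x)) = Real.Gamma s := by
  rw [Real.Gamma_eq_integral hs,
    ← MeasureTheory.integral_comp_rpow_Ioi (fun y => Real.exp (-y) * y ^ (s-1))
      (p := -1) (by norm_num)]
  refine setIntegral_congr_fun measurableSet_Ioi (fun x hx => ?_)
  have hx0 : (0:ℝ) < x := hx
  rw [smul_eq_mul, Real.rpow_neg_one, Real.inv_rpow hx0.le, ← Real.rpow_neg hx0.le]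
  rw [show |(-1:ℝ)| = 1 by norm_num, one_mul, mul_comm (Real.exp _), ← mul_assoc,
    ← Real.rpow_add hx0]
  rw [neg_div, one_div]
  norm_num
  ring_nf

theorem statement15
    (α : ℝ) (hα : 2 ≤ α)
    (ρ : ℝ → ℝ)
    (hρ : ∀ x, ρ x = x ^ (-(2 * α + 1)) * Real.exp (-1 / x) / Real.Gamma (2 * α)) :
    (∫ x in Set.Ioi (0 : ℝ), x * ρ x) = 1 / (2 * α - 1) ∧
    (∫ x in Set.Ioi (0 : ℝ), x ^ 2 * ρ x) = 1 / ((2 * α - 1) * (2 * α - 2)) ∧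
    (∫ x in Set.Ioi (0 : ℝ), x ^ 2 * ρ x) - (∫ x in Set.Ioi (0 : ℝ), x * ρ x) ^ 2
        = 1 / ((2 * α - 1) ^ 2 * (2 * α - 2)) ∧
    (∫ x in Set.Ioi (0 : ℝ), x ^ 2 * ρ x) /
        ((∫ x in Set.Ioi (0 : ℝ), x ^ 2 * ρ x) - (∫ x in Set.Ioi (0 : ℝ), x * ρ x) ^ 2)
      = 1 * (2 * α - 1) := by
  have ha1 : (0:ℝ) < 2 * α - 1 := by linarith
  have ha2 : (0:ℝ) < 2 * α - 2 := by linarith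
  have ha3 : α - 1 ≠ 0 := by linarith
  have hG2 : 0 < Real.Gamma (2 * α - 2) := Real.Gamma_pos_of_pos ha2
  have hrec1 : Real.Gamma (2 * α) = (2 * α - 1) * Real.Gamma (2 * α - 1) := by
    have := Real.Gamma_add_one (s := 2 * α - 1) ha1.ne'
    rw [show 2 * α - 1 + 1 = 2 * α by ring] at this
    exact this
  have hrec2 : Real.Gamma (2 * α - 1) = (2 * α - 2) * Real.Gamma (2 * α - 2) := by
    have := Real.Gamma_add_one (s := 2 * α - 2) ha2.ne'
    rw [show 2 * α - 2 + 1 = 2 * α - 1 by ring] at this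
    exact this
  have h1 : (∫ x in Set.Ioi (0 : ℝ), x * ρ x)
      = Real.Gamma (2 * α - 1) / Real.Gamma (2 * α) := by
    have : (∫ x in Set.Ioi (0 : ℝ), x * ρ x)
        = ∫ x in Set.Ioi (0 : ℝ),
            (x ^ (-((2 * α - 1) + 1)) * Real.exp (-1 / x)) / Real.Gamma (2 * α) := by
      refine setIntegral_congr_fun measurableSet_Ioi (fun x hx => ?_)
      have hx0 : (0:ℝ) < x := hx
      rw [hρ x, ← mul_div_assoc, ← mul_assoc]
      congr 1
      rw [show (-((2*α-1)+1)) = 1 + -(2*α+1) by ring, Real.rpow_add hx0, Real.rpow_one]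
    rw [this, integral_div, aux_gamma _ (by linarith)]
  have h2 : (∫ x in Set.Ioi (0 : ℝ), x ^ 2 * ρ x)
      = Real.Gamma (2 * α - 2) / Real.Gamma (2 * α) := by
    have : (∫ x in Set.Ioi (0 : ℝ), x ^ 2 * ρ x)
        = ∫ x in Set.Ioi (0 : ℝ),
            (x ^ (-((2 * α - 2) + 1)) * Real.exp (-1 / x)) / Real.Gamma (2 * α) := by
      refine setIntegral_congr_fun measurableSet_Ioi (fun x hx => ?_)
      have hx0 : (0:ℝ) < x := hx
      rw [hρ x, ← mul_div_assoc, ← mul_assoc]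
      congr 1
      rw [show (-((2*α-2)+1)) = ((2:ℕ):ℝ) + -(2*α+1) by push_cast; ring,
        Real.rpow_add hx0, Real.rpow_natCast]
    rw [this, integral_div, aux_gamma _ (by linarith)]
  have hm1 : (∫ x in Set.Ioi (0 : ℝ), x * ρ x) = 1 / (2 * α - 1) := by
    rw [h1, hrec1, hrec2]
    rw [div_eq_div_iff (mul_pos ha1 (mul_pos ha2 hG2)).ne' ha1.ne']
    ring
  have hm2 : (∫ x in Set.Ioi (0 : ℝ), x ^ 2 * ρ x) = 1 / ((2 * α - 1) * (2 * α - 2)) := by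
    rw [h2, hrec1, hrec2]
    rw [div_eq_div_iff (mul_pos ha1 (mul_pos ha2 hG2)).ne' (mul_pos ha1 ha2).ne']
    ring
  refine ⟨hm1, hm2, ?_, ?_⟩
  · rw [hm1, hm2]; field_simp [ha1.ne', ha2.ne', hG2.ne', ha3]; ring
  · rw [hm1, hm2]
    rw [show 1 / ((2 * α - 1) * (2 * α - 2)) - (1 / (2 * α - 1)) ^ 2
        = 1 / ((2 * α - 1) ^ 2 * (2 * α - 2)) by field_simp [ha1.ne', ha2.ne', hG2.ne', ha3]; ring]
    field_simp [ha1.ne', ha2.ne', hG2.ne', ha3]
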